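/- arXiv:1806.03763 — 2 statements merged into one kernel-verified Lean document; each statement's English description precedes it below -/
import Mathlib

section
/- Let 𝕂 = ℝ or ℂ, suppose 𝒞 is nonempty and compact, and let R be finite with tr(X) ≤ R for every X ∈ 𝒞. Let C, W ∈ S^{n×n}, let ε_f ≥ 0, and let X ∈ 𝒞 satisfy ⟨C+W, X⟩ ≤ min_{X' ∈ 𝒞} ⟨C+W, X'⟩ + ε_f. Then 0 ≤ ⟨C, X⟩ − min_{X' ∈ 𝒞} ⟨C, X'⟩ ≤ ε_f + 2‖W‖_op·R. -/
open scoped Matrix BigOperators ComplexOrder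
open MeasureTheory ProbabilityTheory

noncomputable section

namespace SmoothedBM

variable {𝕂 : Type*} [RCLike 𝕂]

/-- Real Frobenius inner product `⟨A,B⟩ = Re tr(Aᴴ B)`. -/
def finner {n k : ℕ} (A B : Matrix (Fin n) (Fin k) 𝕂) : ℝ :=
  RCLike.re (Matrix.trace (Aᴴ * B))

/-- Frobenius norm. -/
def fnorm {n k : ℕ} (A : Matrix (Fin n) (Fin k) 𝕂) : ℝ :=
  Real.sqrt (finner A A)

/-- Spectral (operator) norm: the largest singular value, i.e. the square root of the
largest eigenvalue of `Aᴴ * A`. -/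
def opNorm {n k : ℕ} (A : Matrix (Fin n) (Fin k) 𝕂) : ℝ :=
  ⨆ i, Real.sqrt ((Matrix.isHermitian_conjTranspose_mul_self A).eigenvalues i)

/-- The `k`-th (smallest) singular value of an `n × k` matrix: the square root of the
smallest eigenvalue of `Yᴴ * Y`.  (It is `0` when `k > n`.) -/
def sigmaLast {n k : ℕ} (Y : Matrix (Fin n) (Fin k) 𝕂) : ℝ :=
  Real.sqrt (⨅ i, (Matrix.isHermitian_conjTranspose_mul_self Y).eigenvalues i)

/-- Squared singular values of an `n × n` matrix, sorted in increasing order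
(eigenvalues of `Aᴴ * A`, sorted). -/
def svSqAsc {n : ℕ} (A : Matrix (Fin n) (Fin n) 𝕂) : Fin n → ℝ := fun i =>
  (Matrix.isHermitian_conjTranspose_mul_self A).eigenvalues
    (Tuple.sort ((Matrix.isHermitian_conjTranspose_mul_self A).eigenvalues) i)

/-- Sum of the squares of the `k` smallest singular values of an `n × n` matrix. -/
def sumSqSmallestSV {n : ℕ} (k : ℕ) (A : Matrix (Fin n) (Fin n) 𝕂) : ℝ :=
  ∑ i : Fin n, if (i : ℕ) < k then svSqAsc A i else 0

open Classical in
/-- Smallest eigenvalue of a self-adjoint matrix (junk value `0` if not self-adjoint). -/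
def lambdaMin {n : ℕ} (A : Matrix (Fin n) (Fin n) 𝕂) : ℝ :=
  if hA : A.IsHermitian then ⨅ i, hA.eigenvalues i else 0

open Classical in
/-- Number of eigenvalues of a self-adjoint matrix lying in a set `I ⊆ ℝ`
(junk value `0` if not self-adjoint). -/
def eigCountIn {n : ℕ} (A : Matrix (Fin n) (Fin n) 𝕂) (I : Set ℝ) : ℕ :=
  if hA : A.IsHermitian then (Finset.univ.filter fun i => hA.eigenvalues i ∈ I).card else 0

variable {n m k : ℕ}

/-- The constraint map `𝒜(Z)ᵢ = ⟨Aᵢ, Z⟩`. -/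
def calA (A : Fin m → Matrix (Fin n) (Fin n) 𝕂) (Z : Matrix (Fin n) (Fin n) 𝕂) :
    Fin m → ℝ := fun i => finner (A i) Z

/-- The adjoint map `𝒜*(μ) = ∑ᵢ μᵢ Aᵢ`. -/
def calAstar (A : Fin m → Matrix (Fin n) (Fin n) 𝕂) (μ : Fin m → ℝ) :
    Matrix (Fin n) (Fin n) 𝕂 := ∑ i, (μ i : 𝕂) • A i

/-- The SDP feasible set `𝒞`. -/
def SDPSet (A : Fin m → Matrix (Fin n) (Fin n) 𝕂) (b : Fin m → ℝ) :
    Set (Matrix (Fin n) (Fin n) 𝕂) :=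
  {X | X.PosSemidef ∧ ∀ i, finner (A i) X = b i}

/-- The factorized feasible set `ℳ_k`. -/
def FactSet (A : Fin m → Matrix (Fin n) (Fin n) 𝕂) (b : Fin m → ℝ) (k : ℕ) :
    Set (Matrix (Fin n) (Fin k) 𝕂) :=
  {Y | ∀ i, finner (A i) (Y * Yᴴ) = b i}

/-- The Gram matrix `G(Y)ᵢⱼ = ⟨AᵢY, AⱼY⟩`. -/
def gram (A : Fin m → Matrix (Fin n) (Fin n) 𝕂) (Y : Matrix (Fin n) (Fin k) 𝕂) :
    Matrix (Fin m) (Fin m) ℝ :=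
  Matrix.of fun i j => finner (A i * Y) (A j * Y)

/-- The four Moore–Penrose identities. -/
def IsMoorePenrose {m : ℕ} (G H : Matrix (Fin m) (Fin m) ℝ) : Prop :=
  G * H * G = G ∧ H * G * H = H ∧ (G * H)ᵀ = G * H ∧ (H * G)ᵀ = H * G

open Classical in
/-- The Moore–Penrose pseudo-inverse (the unique matrix satisfying the four
Moore–Penrose identities; junk value `0` if none exists). -/
def pinv {m : ℕ} (G : Matrix (Fin m) (Fin m) ℝ) : Matrix (Fin m) (Fin m) ℝ :=
  if h : ∃ H, IsMoorePenrose G H then h.choose else 0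

/-- The matrix `S(Y) = C − 𝒜*(G(Y)† 𝒜(C Y Yᴴ))`. -/
def Smat (A : Fin m → Matrix (Fin n) (Fin n) 𝕂) (C : Matrix (Fin n) (Fin n) 𝕂)
    (Y : Matrix (Fin n) (Fin k) 𝕂) : Matrix (Fin n) (Fin n) 𝕂 :=
  C - calAstar A (pinv (gram A Y) *ᵥ calA A (C * (Y * Yᴴ)))

/-- `Y` is an `εg`-approximate first-order stationary point of the factorized problem. -/
def IsFOSP (A : Fin m → Matrix (Fin n) (Fin n) 𝕂) (b : Fin m → ℝ)
    (C : Matrix (Fin n) (Fin n) 𝕂) (Y : Matrix (Fin n) (Fin k) 𝕂) (εg : ℝ) : Prop :=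
  Y ∈ FactSet A b k ∧ fnorm ((2 : 𝕂) • (Smat A C Y * Y)) ≤ εg

/-- `Y` is an `(εg, εH)`-approximate second-order stationary point of the factorized problem. -/
def IsSOSP (A : Fin m → Matrix (Fin n) (Fin n) 𝕂) (b : Fin m → ℝ)
    (C : Matrix (Fin n) (Fin n) 𝕂) (Y : Matrix (Fin n) (Fin k) 𝕂) (εg εH : ℝ) : Prop :=
  IsFOSP A b C Y εg ∧
    ∀ V : Matrix (Fin n) (Fin k) 𝕂, (∀ i, finner (A i * Y) V = 0) →
      -εH * (fnorm V) ^ 2 ≤ finner V (Smat A C Y * V)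

/-- The smooth-manifold assumption (Assumption 1). -/
def SmoothAssumption (A : Fin m → Matrix (Fin n) (Fin n) 𝕂) (b : Fin m → ℝ) : Prop :=
  ∀ k' : ℕ, k' ≤ n → (FactSet A b k').Nonempty →
    (∀ Y ∈ FactSet A b k', LinearIndependent ℝ fun i => A i * Y) ∨
    (∃ U : Set (Matrix (Fin n) (Fin k') 𝕂), IsOpen U ∧ FactSet A b k' ⊆ U ∧
      ∃ d : ℕ, ∀ Y ∈ U,
        Module.finrank ℝ (Submodule.span ℝ (Set.range fun i => A i * Y)) = d)

/-- A real Gaussian Wigner matrix with variance `σ²`: a random real symmetric matrix whose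
on-and-above-diagonal entries are independent centered Gaussians `N(0, σ²)`. -/
structure IsRealWigner {Ω : Type*} [MeasurableSpace Ω] (μ : Measure Ω) {n : ℕ} (σ : ℝ)
    (W : Ω → Matrix (Fin n) (Fin n) ℝ) : Prop where
  symm : ∀ ω, (W ω)ᵀ = W ω
  meas : ∀ i j, Measurable fun ω => W ω i j
  indep : iIndepFun (m := fun _ : {p : Fin n × Fin n // p.1 ≤ p.2} => inferInstance)
    (fun p ω => W ω p.val.1 p.val.2) μ
  gauss : ∀ i j : Fin n, i ≤ j →
    Measure.map (fun ω => W ω i j) μ = gaussianReal 0 ⟨σ ^ 2, sq_nonneg σ⟩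

/-- The independent real coordinates of a complex Hermitian random matrix:
diagonal entries, and real/imaginary parts of the above-diagonal entries. -/
def wignerParts {Ω : Type*} {n : ℕ} (W : Ω → Matrix (Fin n) (Fin n) ℂ) :
    (Fin n ⊕ {p : Fin n × Fin n // p.1 < p.2} × Bool) → Ω → ℝ
  | Sum.inl i => fun ω => (W ω i i).re
  | Sum.inr (p, false) => fun ω => (W ω p.val.1 p.val.2).re
  | Sum.inr (p, true) => fun ω => (W ω p.val.1 p.val.2).im

/-- A complex Gaussian Wigner matrix with variance `σ²`: a random Hermitian matrix whose
on-and-above-diagonal entries are independent, the diagonal entries being real `N(0, σ²)` and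
the above-diagonal entries having independent `N(0, σ²/2)` real and imaginary parts. -/
structure IsComplexWigner {Ω : Type*} [MeasurableSpace Ω] (μ : Measure Ω) {n : ℕ} (σ : ℝ)
    (W : Ω → Matrix (Fin n) (Fin n) ℂ) : Prop where
  herm : ∀ ω, (W ω).IsHermitian
  meas : ∀ i j, Measurable fun ω => W ω i j
  indep : iIndepFun (m := fun _ : Fin n ⊕ {p : Fin n × Fin n // p.1 < p.2} × Bool => inferInstance)
    (wignerParts W) μ
  diag : ∀ i : Fin n,
    Measure.map (fun ω => (W ω i i).re) μ = gaussianReal 0 ⟨σ ^ 2, sq_nonneg σ⟩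
  off_re : ∀ i j : Fin n, i < j →
    Measure.map (fun ω => (W ω i j).re) μ = gaussianReal 0 ⟨σ ^ 2 / 2, by positivity⟩
  off_im : ∀ i j : Fin n, i < j →
    Measure.map (fun ω => (W ω i j).im) μ = gaussianReal 0 ⟨σ ^ 2 / 2, by positivity⟩



section Aux
variable {n : ℕ}

lemma dot_conj_transform (M : Matrix (Fin n) (Fin n) 𝕂) (U : Matrix (Fin n) (Fin n) 𝕂)
    (v : Fin n → 𝕂) :
    dotProduct (star (star U *ᵥ v)) (M *ᵥ (star U *ᵥ v))
      = dotProduct (star v) ((U * M * star U) *ᵥ v) := by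
  rw [Matrix.star_mulVec, Matrix.mulVec_mulVec, ← Matrix.dotProduct_mulVec,
    Matrix.star_eq_conjTranspose, Matrix.conjTranspose_conjTranspose,
    Matrix.mulVec_mulVec, ← Matrix.mul_assoc]

/-- Rayleigh-type upper bound for a Hermitian quadratic form. -/
lemma quad_le (P : Matrix (Fin n) (Fin n) 𝕂) (hP : P.IsHermitian) (c : ℝ)
    (hc : ∀ i, hP.eigenvalues i ≤ c) (hc0 : 0 ≤ c) (v : Fin n → 𝕂) :
    RCLike.re (dotProduct (star v) (P *ᵥ v))
      ≤ c * RCLike.re (dotProduct (star v) v) := by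
  classical
  set U : Matrix (Fin n) (Fin n) 𝕂 := (hP.eigenvectorUnitary : Matrix (Fin n) (Fin n) 𝕂) with hU
  set w : Fin n → 𝕂 := star U *ᵥ v with hw
  have hspec : P = U * Matrix.diagonal (RCLike.ofReal ∘ hP.eigenvalues) * star U := hP.spectral_theorem
  have h1 : dotProduct (star v) (P *ᵥ v)
      = dotProduct (star w) ((Matrix.diagonal (RCLike.ofReal ∘ hP.eigenvalues)) *ᵥ w) := by
    rw [hw, dot_conj_transform, ← hspec]
  have h2 : dotProduct (star v) v = dotProduct (star w) w := by
    have := dot_conj_transform (1 : Matrix (Fin n) (Fin n) 𝕂) U v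
    rw [Matrix.mul_one, (Matrix.mem_unitaryGroup_iff).mp hP.eigenvectorUnitary.2] at this
    simp only [Matrix.one_mulVec] at this
    rw [hw]
    exact this.symm
  rw [h1, h2]
  have hterm : ∀ i : Fin n, (star w) i * ((Matrix.diagonal (RCLike.ofReal ∘ hP.eigenvalues)) *ᵥ w) i
      = ((hP.eigenvalues i * ‖w i‖ ^ 2 : ℝ) : 𝕂) := by
    intro i
    simp only [Matrix.mulVec_diagonal, Pi.star_apply, Function.comp_apply]
    rw [RCLike.star_def, mul_comm ((hP.eigenvalues i : 𝕂)) (w i), ← mul_assoc,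
      mul_comm (starRingEnd 𝕂 (w i)) (w i), RCLike.mul_conj]
    push_cast
    ring
  have hterm2 : ∀ i : Fin n, (star w) i * w i = ((‖w i‖ ^ 2 : ℝ) : 𝕂) := by
    intro i
    simp only [Pi.star_apply, RCLike.star_def, RCLike.conj_mul]
    push_cast; ring
  rw [dotProduct, dotProduct, map_sum, map_sum]
  have e1 : ∀ i ∈ Finset.univ, RCLike.re ((star w) i *
      ((Matrix.diagonal (RCLike.ofReal ∘ hP.eigenvalues)) *ᵥ w) i)
      = hP.eigenvalues i * ‖w i‖ ^ 2 := fun i _ => by rw [hterm i, RCLike.ofReal_re]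
  have e2 : ∀ i ∈ Finset.univ, RCLike.re ((star w) i * w i) = ‖w i‖ ^ 2 :=
    fun i _ => by rw [hterm2 i, RCLike.ofReal_re]
  rw [Finset.sum_congr rfl e1, Finset.sum_congr rfl e2, Finset.mul_sum]
  refine Finset.sum_le_sum fun i _ => ?_
  nlinarith [hc i, sq_nonneg ‖w i‖]


lemma opNorm_nonneg (W : Matrix (Fin n) (Fin n) 𝕂) : 0 ≤ opNorm W :=
  Real.iSup_nonneg fun i => Real.sqrt_nonneg _

lemma eig_le_opNorm_sq (W : Matrix (Fin n) (Fin n) 𝕂) (i : Fin n) :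
    (Matrix.isHermitian_conjTranspose_mul_self W).eigenvalues i ≤ opNorm W ^ 2 := by
  have h0 : 0 ≤ (Matrix.isHermitian_conjTranspose_mul_self W).eigenvalues i :=
    Matrix.eigenvalues_conjTranspose_mul_self_nonneg W i
  have h1 : Real.sqrt ((Matrix.isHermitian_conjTranspose_mul_self W).eigenvalues i) ≤ opNorm W := by
    exact le_ciSup (f := fun j => Real.sqrt
      ((Matrix.isHermitian_conjTranspose_mul_self W).eigenvalues j))
      (Set.Finite.bddAbove (Set.finite_range _)) i
  nlinarith [Real.sq_sqrt h0, Real.sqrt_nonneg ((Matrix.isHermitian_conjTranspose_mul_self W).eigenvalues i)]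

lemma abs_quad_le_opNorm (W : Matrix (Fin n) (Fin n) 𝕂) (v : Fin n → 𝕂) :
    |RCLike.re (dotProduct (star v) (W *ᵥ v))|
      ≤ opNorm W * RCLike.re (dotProduct (star v) v) := by
  classical
  set x : EuclideanSpace 𝕂 (Fin n) := (WithLp.equiv 2 _).symm v with hx
  set y : EuclideanSpace 𝕂 (Fin n) := (WithLp.equiv 2 _).symm (W *ᵥ v) with hy
  have hxy : (inner 𝕂 x y : 𝕂) = dotProduct (star v) (W *ᵥ v) := by
    rw [EuclideanSpace.inner_eq_star_dotProduct, dotProduct_comm]; rfl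
  have hxx : (inner 𝕂 x x : 𝕂) = dotProduct (star v) v := by
    rw [EuclideanSpace.inner_eq_star_dotProduct, dotProduct_comm]; rfl
  have hyy : (inner 𝕂 y y : 𝕂) = dotProduct (star (W *ᵥ v)) (W *ᵥ v) := by
    rw [EuclideanSpace.inner_eq_star_dotProduct, dotProduct_comm]; rfl
  have hWv : dotProduct (star (W *ᵥ v)) (W *ᵥ v)
      = dotProduct (star v) ((Wᴴ * W) *ᵥ v) := by
    rw [Matrix.star_mulVec, ← Matrix.dotProduct_mulVec, Matrix.mulVec_mulVec]
  have hnx : ‖x‖ ^ 2 = RCLike.re (dotProduct (star v) v) := by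
    rw [← hxx, inner_self_eq_norm_sq (𝕜 := 𝕂) x]
  have hny : ‖y‖ ^ 2 ≤ (opNorm W) ^ 2 * ‖x‖ ^ 2 := by
    rw [← inner_self_eq_norm_sq (𝕜 := 𝕂) y, hyy, hWv, hnx]
    exact quad_le (Wᴴ * W) (Matrix.isHermitian_conjTranspose_mul_self W) (opNorm W ^ 2)
      (eig_le_opNorm_sq W) (sq_nonneg _) v
  have hny' : ‖y‖ ≤ opNorm W * ‖x‖ := by
    have h1 : ‖y‖ ^ 2 ≤ (opNorm W * ‖x‖) ^ 2 := by rw [mul_pow]; exact hny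
    have h2 : 0 ≤ opNorm W * ‖x‖ := mul_nonneg (opNorm_nonneg W) (norm_nonneg x)
    nlinarith [norm_nonneg y]
  calc |RCLike.re (dotProduct (star v) (W *ᵥ v))| = |RCLike.re (inner 𝕂 x y : 𝕂)| := by
        rw [hxy]
    _ ≤ ‖(inner 𝕂 x y : 𝕂)‖ := RCLike.abs_re_le_norm _
    _ ≤ ‖x‖ * ‖y‖ := norm_inner_le_norm x y
    _ ≤ ‖x‖ * (opNorm W * ‖x‖) := by
        exact mul_le_mul_of_nonneg_left hny' (norm_nonneg x)
    _ = opNorm W * ‖x‖ ^ 2 := by ring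
    _ = opNorm W * RCLike.re (dotProduct (star v) v) := by rw [hnx]


lemma abs_finner_le_opNorm_mul_trace (W X : Matrix (Fin n) (Fin n) 𝕂)
    (hW : W.IsHermitian) (hX : X.PosSemidef) :
    |finner W X| ≤ opNorm W * RCLike.re X.trace := by
  classical
  have hH : X.IsHermitian := hX.1
  set U : Matrix (Fin n) (Fin n) 𝕂 := (hH.eigenvectorUnitary : Matrix (Fin n) (Fin n) 𝕂) with hU
  set D : Matrix (Fin n) (Fin n) 𝕂 := Matrix.diagonal (RCLike.ofReal ∘ hH.eigenvalues) with hD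
  have hspec : X = U * D * star U := hH.spectral_theorem
  have hUU : star U * U = 1 := Matrix.UnitaryGroup.star_mul_self hH.eigenvectorUnitary
  -- the trace of X is the sum of eigenvalues
  have htr : RCLike.re X.trace = ∑ i, hH.eigenvalues i := by
    have : X.trace = D.trace := by
      calc X.trace = (U * D * star U).trace := by rw [← hspec]
        _ = (star U * (U * D)).trace := Matrix.trace_mul_comm (U * D) (star U)
        _ = D.trace := by rw [← Matrix.mul_assoc, hUU, Matrix.one_mul]
    rw [this, hD, Matrix.trace_diagonal, map_sum]
    simp
  -- express finner W X through M = star U * W * U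
  set M : Matrix (Fin n) (Fin n) 𝕂 := star U * W * U with hM
  have hfin : finner W X = ∑ i, hH.eigenvalues i * RCLike.re (M i i) := by
    unfold finner
    rw [hW.eq]
    have hkey : (W * X).trace = (M * D).trace := by
      calc (W * X).trace = (W * (U * D * star U)).trace := by rw [← hspec]
        _ = (W * (U * D) * star U).trace := by congr 1; noncomm_ring
        _ = (star U * (W * (U * D))).trace := Matrix.trace_mul_comm _ _
        _ = (M * D).trace := by rw [hM]; congr 1; noncomm_ring
    rw [hkey]
    have : (M * D).trace = ∑ i, M i i * RCLike.ofReal (hH.eigenvalues i) := by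
      rw [Matrix.trace]
      refine Finset.sum_congr rfl fun i _ => ?_
      rw [Matrix.diag_apply, hD, Matrix.mul_diagonal]
      rfl
    rw [this, map_sum]
    refine Finset.sum_congr rfl fun i _ => ?_
    rw [mul_comm (M i i), RCLike.re_ofReal_mul]
  -- diagonal entries of M are quadratic forms in the unit columns of U
  have hcol : ∀ i : Fin n, M i i
      = dotProduct (star (fun a => U a i)) (W *ᵥ fun a => U a i) := by
    intro i
    simp only [hM, Matrix.mul_apply, dotProduct, Matrix.mulVec, dotProduct,
      Pi.star_apply, Matrix.star_apply, RCLike.star_def, Finset.sum_mul, Finset.mul_sum]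
    rw [Finset.sum_comm]
    refine Finset.sum_congr rfl fun a _ => Finset.sum_congr rfl fun b _ => by ring
  have hunit : ∀ i : Fin n,
      dotProduct (star (fun a => U a i)) (fun a => U a i) = 1 := by
    intro i
    have : (star U * U) i i = (1 : Matrix (Fin n) (Fin n) 𝕂) i i := by rw [hUU]
    rw [Matrix.one_apply_eq] at this
    rw [← this, Matrix.mul_apply]
    simp [dotProduct, Matrix.star_apply]
  have hbound : ∀ i : Fin n, |RCLike.re (M i i)| ≤ opNorm W := by
    intro i
    have := abs_quad_le_opNorm W (fun a => U a i)
    rw [← hcol i, hunit i] at this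
    simpa using this
  have heig : ∀ i : Fin n, 0 ≤ hH.eigenvalues i := hX.eigenvalues_nonneg
  calc |finner W X| = |∑ i, hH.eigenvalues i * RCLike.re (M i i)| := by rw [hfin]
    _ ≤ ∑ i, |hH.eigenvalues i * RCLike.re (M i i)| := Finset.abs_sum_le_sum_abs _ _
    _ ≤ ∑ i, hH.eigenvalues i * opNorm W := by
        refine Finset.sum_le_sum fun i _ => ?_
        rw [abs_mul, abs_of_nonneg (heig i)]
        exact mul_le_mul_of_nonneg_left (hbound i) (heig i)
    _ = opNorm W * RCLike.re X.trace := by rw [htr, ← Finset.sum_mul, mul_comm]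



lemma finner_continuous (C : Matrix (Fin n) (Fin n) 𝕂) :
    Continuous fun X : Matrix (Fin n) (Fin n) 𝕂 => finner C X :=
  RCLike.continuous_re.comp ((continuous_const.matrix_mul continuous_id).matrix_trace)

lemma finner_add_left (C W X : Matrix (Fin n) (Fin n) 𝕂) :
    finner (C + W) X = finner C X + finner W X := by
  unfold finner
  rw [Matrix.conjTranspose_add, Matrix.add_mul, Matrix.trace_add, map_add]

end Aux

/-- Corollary, deterministic part: an `εf`-approximate solution of the
perturbed SDP is an `(εf + 2‖W‖_op R)`-approximate solution of the unperturbed SDP. -/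
theorem perturbed_to_unperturbed_gap
    {𝕂 : Type*} [RCLike 𝕂] {n m : ℕ} (hn : 0 < n) (hm : 0 < m)
    (A : Fin m → Matrix (Fin n) (Fin n) 𝕂) (hA : ∀ i, (A i).IsHermitian)
    (b : Fin m → ℝ)
    (hCne : (SDPSet A b).Nonempty) (hCcpt : IsCompact (SDPSet A b))
    (R : ℝ) (hR : ∀ X ∈ SDPSet A b, RCLike.re (Matrix.trace X) ≤ R)
    (C W : Matrix (Fin n) (Fin n) 𝕂) (hC : C.IsHermitian) (hW : W.IsHermitian)
    (εf : ℝ) (hεf : 0 ≤ εf)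
    (X : Matrix (Fin n) (Fin n) 𝕂) (hX : X ∈ SDPSet A b)
    (hXopt : finner (C + W) X ≤
      sInf ((fun X' => finner (C + W) X') '' SDPSet A b) + εf) :
    0 ≤ finner C X - sInf ((fun X' => finner C X') '' SDPSet A b) ∧
    finner C X - sInf ((fun X' => finner C X') '' SDPSet A b) ≤
      εf + 2 * opNorm W * R := by
  classical
  set s : Set (Matrix (Fin n) (Fin n) 𝕂) := SDPSet A b with hs
  have contC := finner_continuous (𝕂 := 𝕂) C
  have contCW := finner_continuous (𝕂 := 𝕂) (C + W)
  obtain ⟨Xs, hXs_mem, hXs_min⟩ := hCcpt.exists_isMinOn hCne contC.continuousOn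
  obtain ⟨Ys, hYs_mem, hYs_min⟩ := hCcpt.exists_isMinOn hCne contCW.continuousOn
  have hsInfC : sInf ((fun X' => finner C X') '' s) = finner C Xs := by
    refine csInf_eq_of_forall_ge_of_forall_gt_exists_lt ⟨_, Set.mem_image_of_mem _ hXs_mem⟩ ?_ ?_
    · rintro y ⟨Z, hZ, rfl⟩; exact hXs_min hZ
    · intro w hw; exact ⟨finner C Xs, Set.mem_image_of_mem _ hXs_mem, hw⟩
  have hsInfCW : sInf ((fun X' => finner (C + W) X') '' s) = finner (C + W) Ys := by
    refine csInf_eq_of_forall_ge_of_forall_gt_exists_lt ⟨_, Set.mem_image_of_mem _ hYs_mem⟩ ?_ ?_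
    · rintro y ⟨Z, hZ, rfl⟩; exact hYs_min hZ
    · intro w hw; exact ⟨finner (C + W) Ys, Set.mem_image_of_mem _ hYs_mem, hw⟩
  have hWbound : ∀ Z ∈ s, |finner W Z| ≤ opNorm W * R := by
    intro Z hZ
    have h1 := abs_finner_le_opNorm_mul_trace W Z hW hZ.1
    have h2 : opNorm W * RCLike.re Z.trace ≤ opNorm W * R :=
      mul_le_mul_of_nonneg_left (hR Z hZ) (opNorm_nonneg W)
    exact h1.trans h2
  have hXW := hWbound X hX
  have hXsW := hWbound Xs hXs_mem
  have habsX := abs_le.mp hXW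
  have habsXs := abs_le.mp hXsW
  rw [hsInfC]
  constructor
  · have h0 : finner C Xs ≤ finner C X := hXs_min hX
    linarith
  · -- main chain
    have h1 : finner (C + W) X ≤ finner (C + W) Ys + εf := by
      rw [← hsInfCW]; exact hXopt
    have h2 : finner (C + W) Ys ≤ finner (C + W) Xs := hYs_min hXs_mem
    have h3 : finner (C + W) X = finner C X + finner W X := finner_add_left C W X
    have h4 : finner (C + W) Xs = finner C Xs + finner W Xs := finner_add_left C W Xs
    have key : finner C X ≤ finner C Xs + finner W Xs - finner W X + εf := by
      have := h1.trans (by linarith : finner (C + W) Ys + εf ≤ finner (C + W) Xs + εf)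
      rw [h3, h4] at this
      linarith
    linarith [habsX.1, habsXs.2]

end SmoothedBM
end
end

section
/- Let 𝕂 = ℝ or ℂ, let S be a self-adjoint n×n matrix over 𝕂, and let Y ∈ 𝕂^{n×k} with k ≤ n. Then ‖SY‖ ≥ σ_k(Y) · √(Σ_{i=1}^k σ_{n−(i−1)}(S)²), where ‖·‖ is the Frobenius norm, σ_k(Y) is the smallest singular value of Y, and σ_{n−(i−1)}(S) denotes the (n−i+1)-st largest singular value of S (so the sum is over the k smallest singular values of S). -/
open scoped Matrix BigOperators ComplexOrder
open MeasureTheory ProbabilityTheory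

noncomputable section

namespace SmoothedBM

variable {𝕂 : Type*} [RCLike 𝕂]

variable {n m k : ℕ}

section Helpers

variable {n k : ℕ}

private lemma re_diag_nonneg {M : Matrix (Fin n) (Fin n) 𝕂}
    (hM : M.PosSemidef) (i : Fin n) : 0 ≤ RCLike.re (M i i) := by
  have h := hM.diag_nonneg (i := i)
  exact (RCLike.nonneg_iff.mp h).1

private lemma re_trace_nonneg {M : Matrix (Fin n) (Fin n) 𝕂}
    (hM : M.PosSemidef) : 0 ≤ RCLike.re M.trace := by
  rw [Matrix.trace, map_sum]
  exact Finset.sum_nonneg fun i _ => re_diag_nonneg hM i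

private lemma sum_small_le (hk : 1 ≤ k) (hkn : k ≤ n)
    (d w : Fin n → ℝ) (hd : Monotone d) (hw0 : ∀ i, 0 ≤ w i) (hw1 : ∀ i, w i ≤ 1)
    (hws : ∑ i, w i = k) :
    ∑ i : Fin n, (if (i : ℕ) < k then d i else 0) ≤ ∑ i : Fin n, d i * w i := by
  have hp : k - 1 < n := by omega
  set p : Fin n := ⟨k - 1, hp⟩ with hpdef
  have key : ∀ i : Fin n, d p * (w i - if (i:ℕ) < k then 1 else 0)
      ≤ d i * w i - (if (i:ℕ) < k then d i else 0) := by
    intro i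
    by_cases h : (i:ℕ) < k
    · simp only [if_pos h]
      have hip : i ≤ p := by simp [hpdef, Fin.le_def]; omega
      nlinarith [hd hip, hw1 i]
    · simp only [if_neg h]
      have hpi : p ≤ i := by simp [hpdef, Fin.le_def]; omega
      nlinarith [hd hpi, hw0 i]
  have hone : ∑ i : Fin n, (if (i:ℕ) < k then (1:ℝ) else 0) = k := by
    have h : (Finset.range n).filter (· < k) = Finset.range k := by
      ext i; simp only [Finset.mem_filter, Finset.mem_range]; omega
    rw [Fin.sum_univ_eq_sum_range (fun i => if i < k then (1:ℝ) else 0), ← Finset.sum_filter, h,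
      Finset.sum_const, Finset.card_range]
    simp
  have hsum := Finset.sum_le_sum (fun i (_ : i ∈ Finset.univ) => key i)
  rw [← Finset.mul_sum, Finset.sum_sub_distrib, hws, hone, sub_self, mul_zero,
    Finset.sum_sub_distrib] at hsum
  linarith

private lemma sandwich1 (Y : Matrix (Fin n) (Fin k) 𝕂) (V : Matrix (Fin k) (Fin k) 𝕂)
    (hV1 : Vᴴ * V = 1) (m : Fin k → 𝕂) (hYY : Yᴴ * Y = V * Matrix.diagonal m * Vᴴ)
    (a b : Fin k → 𝕂) :
    (Y * V * Matrix.diagonal a)ᴴ * (Y * V * Matrix.diagonal b)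
      = Matrix.diagonal (fun i => star (a i) * (m i * b i)) := by
  have h : (Y * V * Matrix.diagonal a)ᴴ * (Y * V * Matrix.diagonal b)
      = Matrix.diagonal (star a) * (Vᴴ * ((Yᴴ * Y) * (V * Matrix.diagonal b))) := by
    simp only [Matrix.conjTranspose_mul, Matrix.diagonal_conjTranspose, Matrix.mul_assoc]
  rw [h, hYY]
  simp only [Matrix.mul_assoc]
  rw [← Matrix.mul_assoc Vᴴ V, hV1, Matrix.one_mul, ← Matrix.mul_assoc Vᴴ V, hV1,
    Matrix.one_mul, ← Matrix.mul_assoc, Matrix.diagonal_mul_diagonal,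
    Matrix.diagonal_mul_diagonal]
  congr 1; funext i; simp [mul_assoc]

private lemma sandwich2 (Y : Matrix (Fin n) (Fin k) 𝕂) (V : Matrix (Fin k) (Fin k) 𝕂)
    (a b : Fin k → 𝕂) :
    (Y * V * Matrix.diagonal a) * (Y * V * Matrix.diagonal b)ᴴ
      = Y * (V * (Matrix.diagonal (fun i => a i * star (b i)) * (Vᴴ * Yᴴ))) := by
  simp only [Matrix.conjTranspose_mul, Matrix.diagonal_conjTranspose, Matrix.mul_assoc,
    ← Matrix.diagonal_mul_diagonal]
  rfl

end Helpers

/-- for self-adjoint `S` (n×n) and `Y` (n×k), `k ≤ n`,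
`‖SY‖ ≥ σ_k(Y) · √(Σ_{i=1}^k σ_{n-(i-1)}(S)²)`. -/
theorem frobenius_lower_bound_smallest_singular_values
    {𝕂 : Type*} [RCLike 𝕂] {n k : ℕ} (hk : 1 ≤ k) (hkn : k ≤ n)
    (S : Matrix (Fin n) (Fin n) 𝕂) (hS : S.IsHermitian)
    (Y : Matrix (Fin n) (Fin k) 𝕂) :
    sigmaLast Y * Real.sqrt (sumSqSmallestSV k S) ≤ fnorm (S * Y) := by
  classical
  have : Nonempty (Fin k) := ⟨⟨0, hk⟩⟩
  have hN := Matrix.isHermitian_conjTranspose_mul_self Y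
  set μ : Fin k → ℝ := hN.eigenvalues with hμdef
  set c : ℝ := ⨅ i, μ i with hcdef
  have hμ0 : ∀ i, 0 ≤ μ i := fun i =>
    (Matrix.posSemidef_conjTranspose_mul_self Y).eigenvalues_nonneg i
  have hc0 : 0 ≤ c := le_ciInf hμ0
  have hT := Matrix.isHermitian_conjTranspose_mul_self S
  set d : Fin n → ℝ := hT.eigenvalues with hddef
  have hd0 : ∀ i, 0 ≤ d i := fun i =>
    (Matrix.posSemidef_conjTranspose_mul_self S).eigenvalues_nonneg i
  set σs : Equiv.Perm (Fin n) := Tuple.sort d with hσdef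
  have hsumSq : sumSqSmallestSV k S = ∑ i : Fin n, (if (i : ℕ) < k then d (σs i) else 0) := rfl
  have hsum0 : 0 ≤ sumSqSmallestSV k S := by
    rw [hsumSq]
    refine Finset.sum_nonneg fun i _ => ?_
    split <;> simp [hd0]
  have hfin0 : 0 ≤ finner (S * Y) (S * Y) :=
    re_trace_nonneg (Matrix.posSemidef_conjTranspose_mul_self (S * Y))
  have main : c * sumSqSmallestSV k S ≤ finner (S * Y) (S * Y) := by
    rcases eq_or_lt_of_le hc0 with h0 | hcpos
    · rw [← h0, zero_mul]; exact hfin0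
    -- eigen data of Yᴴ Y
    set V : Matrix (Fin k) (Fin k) 𝕂 := (hN.eigenvectorUnitary : Matrix (Fin k) (Fin k) 𝕂) with hVdef
    have hV2 : V * Vᴴ = 1 := by
      have := Matrix.mem_unitaryGroup_iff.mp (hN.eigenvectorUnitary).2
      simpa [Matrix.star_eq_conjTranspose] using this
    have hV1 : Vᴴ * V = 1 := by
      have := Matrix.mem_unitaryGroup_iff'.mp (hN.eigenvectorUnitary).2
      simpa [Matrix.star_eq_conjTranspose] using this
    have hYY : Yᴴ * Y = V * Matrix.diagonal (fun i => ((μ i : ℝ) : 𝕂)) * Vᴴ := by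
      exact hN.spectral_theorem
    have hcμ : ∀ i, c ≤ μ i := fun i => ciInf_le (Set.Finite.bddBelow (Set.finite_range μ)) i
    have hμpos : ∀ i, 0 < μ i := fun i => lt_of_lt_of_le hcpos (hcμ i)
    -- B with orthonormal columns spanning range Y
    set e : Fin k → 𝕂 := fun i => (((Real.sqrt (μ i))⁻¹ : ℝ) : 𝕂) with hedef
    set g : Fin k → 𝕂 := fun i => ((Real.sqrt (1 - c * (μ i)⁻¹) : ℝ) : 𝕂) with hgdef
    set B := Y * V * Matrix.diagonal e with hBdef
    set F := Y * V * Matrix.diagonal g with hFdef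
    have hBB : Bᴴ * B = 1 := by
      rw [hBdef, sandwich1 Y V hV1 _ hYY]
      have hfun : (fun i => star (e i) * (((μ i : ℝ) : 𝕂) * e i)) = fun _ => (1 : 𝕂) := by
        funext i
        have h1 : (Real.sqrt (μ i))⁻¹ * (μ i * (Real.sqrt (μ i))⁻¹) = 1 := by
          rw [← Real.mul_self_sqrt (hμ0 i)]
          have := Real.sqrt_pos.mpr (hμpos i)
          field_simp
          rw [Real.sqrt_sq this.le]
        simp only [hedef, RCLike.star_def, RCLike.conj_ofReal, ← RCLike.ofReal_mul, h1, RCLike.ofReal_one]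
      rw [hfun, Matrix.diagonal_one]
    have hPP : B * Bᴴ = Y * (V * (Matrix.diagonal (fun i => (((μ i)⁻¹ : ℝ) : 𝕂))
        * (Vᴴ * Yᴴ))) := by
      rw [hBdef, sandwich2]
      have hfun : (fun i => e i * star (e i)) = fun i => (((μ i)⁻¹ : ℝ) : 𝕂) := by
        funext i
        have h1 : (Real.sqrt (μ i))⁻¹ * (Real.sqrt (μ i))⁻¹ = (μ i)⁻¹ := by
          rw [← mul_inv, Real.mul_self_sqrt (hμ0 i)]
        simp only [hedef, RCLike.star_def, RCLike.conj_ofReal, ← RCLike.ofReal_mul, h1]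
      rw [hfun]
    have hFF : F * Fᴴ = Y * (V * (Matrix.diagonal (fun i => ((1 - c * (μ i)⁻¹ : ℝ) : 𝕂))
        * (Vᴴ * Yᴴ))) := by
      rw [hFdef, sandwich2]
      have hfun : (fun i => g i * star (g i)) = fun i => ((1 - c * (μ i)⁻¹ : ℝ) : 𝕂) := by
        funext i
        have harg : 0 ≤ 1 - c * (μ i)⁻¹ := by
          have h2 : c * (μ i)⁻¹ ≤ 1 := by
            rw [← div_eq_mul_inv, div_le_one (hμpos i)]; exact hcμ i
          linarith
        simp only [hgdef, RCLike.star_def, RCLike.conj_ofReal, ← RCLike.ofReal_mul, Real.mul_self_sqrt harg]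
      rw [hfun]
    have hMP : Y * Yᴴ - (c : 𝕂) • (B * Bᴴ) = F * Fᴴ := by
      rw [hFF, hPP]
      have hdiag : Matrix.diagonal (fun i => ((1 - c * (μ i)⁻¹ : ℝ) : 𝕂))
          = 1 - (c : 𝕂) • Matrix.diagonal (fun i => (((μ i)⁻¹ : ℝ) : 𝕂)) := by
        have hfun2 : (fun i => ((1 - c * (μ i)⁻¹ : ℝ) : 𝕂))
            = ((fun _ => (1 : 𝕂)) - (c : 𝕂) • fun i => (((μ i)⁻¹ : ℝ) : 𝕂)) := by
          funext i
          simp only [Pi.sub_apply, Pi.smul_apply, smul_eq_mul]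
          push_cast
          ring
        have : Matrix.diagonal ((fun _ => (1 : 𝕂)) - (c : 𝕂) • fun i => (((μ i)⁻¹ : ℝ) : 𝕂))
            = Matrix.diagonal (fun _ => (1 : 𝕂))
              - Matrix.diagonal ((c : 𝕂) • fun i => (((μ i)⁻¹ : ℝ) : 𝕂)) := by
          rw [Matrix.diagonal_sub]; rfl
        rw [hfun2, this, Matrix.diagonal_smul, Matrix.diagonal_one]
      rw [hdiag, Matrix.sub_mul, Matrix.one_mul, Matrix.mul_sub, Matrix.mul_sub,
        Matrix.smul_mul, Matrix.mul_smul, Matrix.mul_smul]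
      congr 1
      rw [← Matrix.mul_assoc V Vᴴ, hV2, Matrix.one_mul]
    have hP2 : (B * Bᴴ) * (B * Bᴴ) = B * Bᴴ := by
      rw [Matrix.mul_assoc, ← Matrix.mul_assoc Bᴴ B, hBB, Matrix.one_mul]
    have hPH : (B * Bᴴ)ᴴ = B * Bᴴ := by
      simp [Matrix.conjTranspose_mul]
    have htrP : Matrix.trace (B * Bᴴ) = (k : 𝕂) := by
      rw [Matrix.trace_mul_comm, hBB, Matrix.trace_one]
      simp
    -- eigen data of Sᴴ S
    set U : Matrix (Fin n) (Fin n) 𝕂 := (hT.eigenvectorUnitary : Matrix (Fin n) (Fin n) 𝕂) with hUdef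
    have hU2 : U * Uᴴ = 1 := by
      have := Matrix.mem_unitaryGroup_iff.mp (hT.eigenvectorUnitary).2
      simpa [Matrix.star_eq_conjTranspose] using this
    have hU1 : Uᴴ * U = 1 := by
      have := Matrix.mem_unitaryGroup_iff'.mp (hT.eigenvectorUnitary).2
      simpa [Matrix.star_eq_conjTranspose] using this
    have hTspec : Sᴴ * S = U * Matrix.diagonal (fun i => ((d i : ℝ) : 𝕂)) * Uᴴ := by
      exact hT.spectral_theorem
    set Q := Uᴴ * (B * Bᴴ) * U with hQdef
    set w : Fin n → ℝ := fun i => RCLike.re (Q i i) with hwdef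
    have hQpsd : Q.PosSemidef := by
      have h : Q = (Uᴴ * B) * (Uᴴ * B)ᴴ := by
        rw [Matrix.conjTranspose_mul, Matrix.conjTranspose_conjTranspose, hQdef]
        simp only [Matrix.mul_assoc]
      rw [h]
      exact Matrix.posSemidef_self_mul_conjTranspose _
    have hw0 : ∀ i, 0 ≤ w i := fun i => re_diag_nonneg hQpsd i
    have hw1 : ∀ i, w i ≤ 1 := by
      intro i
      have hR : ((1 - (B * Bᴴ)) * U)ᴴ * ((1 - (B * Bᴴ)) * U) = 1 - Q := by
        rw [Matrix.conjTranspose_mul]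
        have h1 : (1 - B * Bᴴ)ᴴ = 1 - B * Bᴴ := by
          rw [Matrix.conjTranspose_sub, hPH, Matrix.conjTranspose_one]
        have hidem : (1 - B * Bᴴ) * (1 - B * Bᴴ) = 1 - B * Bᴴ := by
          simp only [Matrix.mul_sub, Matrix.sub_mul, Matrix.one_mul, Matrix.mul_one, hP2]
          abel
        rw [h1, Matrix.mul_assoc, ← Matrix.mul_assoc (1 - B * Bᴴ), hidem,
          Matrix.sub_mul, Matrix.mul_sub, Matrix.one_mul, hU1, ← Matrix.mul_assoc, ← hQdef]
      have hpsd : (1 - Q).PosSemidef := by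
        rw [← hR]; exact Matrix.posSemidef_conjTranspose_mul_self _
      have := re_diag_nonneg hpsd i
      rw [Matrix.sub_apply, Matrix.one_apply_eq, map_sub] at this
      simp only [RCLike.one_re] at this
      linarith
    have hwsum : ∑ i, w i = k := by
      have h1 : Matrix.trace Q = (k : 𝕂) := by
        rw [hQdef, Matrix.trace_mul_comm, ← Matrix.mul_assoc, ← Matrix.mul_assoc, hU2,
          Matrix.one_mul, htrP]
      have h2 : ∑ i, w i = RCLike.re (Matrix.trace Q) := by
        rw [Matrix.trace, map_sum]; rfl
      rw [h2, h1]; simp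
    -- the trace identity
    have htr1 : finner (S * Y) (S * Y)
        = RCLike.re (Matrix.trace ((Sᴴ * S) * (Y * Yᴴ))) := by
      unfold finner
      congr 1
      rw [Matrix.conjTranspose_mul, Matrix.mul_assoc, Matrix.trace_mul_comm Yᴴ]
      simp only [Matrix.mul_assoc]
    have htr2 : RCLike.re (Matrix.trace ((Sᴴ * S) * (B * Bᴴ))) = ∑ i, d i * w i := by
      rw [hTspec]
      have h1 : U * Matrix.diagonal (fun i => ((d i : ℝ) : 𝕂)) * Uᴴ * (B * Bᴴ)
          = U * (Matrix.diagonal (fun i => ((d i : ℝ) : 𝕂)) * (Uᴴ * (B * Bᴴ))) := by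
        simp only [Matrix.mul_assoc]
      rw [h1, Matrix.trace_mul_comm U, Matrix.mul_assoc, ← hQdef]
      have h2 : Matrix.trace (Matrix.diagonal (fun i => ((d i : ℝ) : 𝕂)) * Q)
          = ∑ i, ((d i : ℝ) : 𝕂) * Q i i := by
        rw [Matrix.trace]
        exact Finset.sum_congr rfl fun i _ => by
          rw [Matrix.diag_apply, Matrix.diagonal_mul]
      rw [h2, map_sum]
      exact Finset.sum_congr rfl fun i _ => RCLike.re_ofReal_mul _ _
    have hsplit : RCLike.re (Matrix.trace ((Sᴴ * S) * (Y * Yᴴ)))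
        = RCLike.re (Matrix.trace ((Sᴴ * S) * (Y * Yᴴ - (c : 𝕂) • (B * Bᴴ))))
          + c * RCLike.re (Matrix.trace ((Sᴴ * S) * (B * Bᴴ))) := by
      rw [Matrix.mul_sub, Matrix.trace_sub, map_sub, Matrix.mul_smul, Matrix.trace_smul]
      have : RCLike.re ((c : 𝕂) • Matrix.trace (Sᴴ * S * (B * Bᴴ)))
          = c * RCLike.re (Matrix.trace (Sᴴ * S * (B * Bᴴ))) := by
        rw [smul_eq_mul, RCLike.re_ofReal_mul]
      rw [this]; ring
    have hpos1 : 0 ≤ RCLike.re (Matrix.trace ((Sᴴ * S) * (Y * Yᴴ - (c : 𝕂) • (B * Bᴴ)))) := by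
      rw [hMP]
      have h1 : (Sᴴ * S) * (F * Fᴴ) = ((Sᴴ * S) * F) * Fᴴ := by
        simp only [Matrix.mul_assoc]
      rw [h1, Matrix.trace_mul_comm]
      have h2 : Fᴴ * ((Sᴴ * S) * F) = Fᴴ * (Sᴴ * S) * F := by
        simp only [Matrix.mul_assoc]
      rw [h2]
      exact re_trace_nonneg
        ((Matrix.posSemidef_conjTranspose_mul_self S).conjTranspose_mul_mul_same F)
    -- combinatorial step
    have hcomb : sumSqSmallestSV k S ≤ ∑ i, d i * w i := by
      rw [hsumSq]
      have hmono : Monotone (d ∘ σs) := Tuple.monotone_sort d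
      have hws' : ∑ i, w (σs i) = k := by
        rw [Equiv.sum_comp σs w]; exact hwsum
      have := sum_small_le hk hkn (d ∘ σs) (w ∘ σs) hmono (fun i => hw0 _) (fun i => hw1 _) hws'
      simp only [Function.comp] at this
      calc ∑ i : Fin n, (if (i : ℕ) < k then d (σs i) else 0)
          ≤ ∑ i : Fin n, d (σs i) * w (σs i) := this
        _ = ∑ i, d i * w i := Equiv.sum_comp σs (fun i => d i * w i)
    -- put everything together
    calc c * sumSqSmallestSV k S ≤ c * ∑ i, d i * w i := by
          exact mul_le_mul_of_nonneg_left hcomb hc0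
      _ = c * RCLike.re (Matrix.trace ((Sᴴ * S) * (B * Bᴴ))) := by rw [htr2]
      _ ≤ RCLike.re (Matrix.trace ((Sᴴ * S) * (Y * Yᴴ - (c : 𝕂) • (B * Bᴴ))))
          + c * RCLike.re (Matrix.trace ((Sᴴ * S) * (B * Bᴴ))) := by linarith
      _ = RCLike.re (Matrix.trace ((Sᴴ * S) * (Y * Yᴴ))) := hsplit.symm
      _ = finner (S * Y) (S * Y) := htr1.symm
  have hsig : sigmaLast Y = Real.sqrt c := rfl
  have hfn : fnorm (S * Y) = Real.sqrt (finner (S * Y) (S * Y)) := rfl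
  rw [hsig, hfn, ← Real.sqrt_mul hc0]
  exact Real.sqrt_le_sqrt main


end SmoothedBM
end
end
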